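/- For any nonempty graphs G and H on disjoint vertex sets, ρ(G ∨ H) = max{ρ(G) + a(G), ρ(H) + a(H)}, where G ∨ H is the join, ρ is the maximum double neighborhood number, and a(K) = 1 if K has an isolated vertex and a(K) = 0 otherwise. -/

import Mathlib

open SimpleGraph

variable {V : Type*}

/-- The closed neighborhood of a vertex. -/
def cnbr (G : SimpleGraph V) (v : V) : Set V := insert v (G.neighborSet v)

/-- The number of vertices in the list `l` that dominate `u` (i.e. whose closed
neighborhood contains `u`). -/
noncomputable def domCount (G : SimpleGraph V) (u : V) (l : List V) : ℕ :=
  {w | w ∈ l ∧ u ∈ cnbr G w}.ncard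

/-- A double neighborhood sequence (DNS): a sequence of distinct vertices in which each
vertex dominates some vertex dominated at most once by its predecessors. -/
def IsDNS (G : SimpleGraph V) (l : List V) : Prop :=
  l.Nodup ∧ ∀ i : Fin l.length, ∃ u ∈ cnbr G (l.get i), domCount G u (l.take i) ≤ 1

/-- A double dominating sequence (DDS): a DNS whose underlying set is doubly dominating. -/
def IsDDS (G : SimpleGraph V) (l : List V) : Prop :=
  IsDNS G l ∧ ∀ v, 2 ≤ domCount G v l

/-- The Grundy double domination number: maximum length of a DDS. -/
noncomputable def gddn (G : SimpleGraph V) : ℕ :=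
  sSup {n | ∃ l : List V, IsDDS G l ∧ l.length = n}

/-- The maximum double neighborhood number: maximum length of a DNS. -/
noncomputable def mdnn (G : SimpleGraph V) : ℕ :=
  sSup {n | ∃ l : List V, IsDNS G l ∧ l.length = n}

/-- A legal (Grundy domination) sequence. -/
def IsLegal (G : SimpleGraph V) (l : List V) : Prop :=
  l.Nodup ∧ ∀ i : Fin l.length, ∃ u ∈ cnbr G (l.get i), domCount G u (l.take i) = 0

/-- A dominating sequence: legal sequence whose underlying set dominates. -/
def IsDomSeq (G : SimpleGraph V) (l : List V) : Prop :=
  IsLegal G l ∧ ∀ v, 1 ≤ domCount G v l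

/-- The Grundy domination number: maximum length of a dominating sequence. -/
noncomputable def grundy (G : SimpleGraph V) : ℕ :=
  sSup {n | ∃ l : List V, IsDomSeq G l ∧ l.length = n}

/-- The double domination number: minimum size of a double dominating set. -/
noncomputable def ddomNum (G : SimpleGraph V) : ℕ :=
  sInf {n | ∃ D : Set V, (∀ v, 2 ≤ {w | w ∈ D ∧ v ∈ cnbr G w}.ncard) ∧ D.ncard = n}

/-- The join of two graphs on disjoint vertex sets: disjoint union plus all edges
between the two sides. -/
def joinG {α β : Type*} (G : SimpleGraph α) (H : SimpleGraph β) : SimpleGraph (α ⊕ β) where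
  Adj a b := match a, b with
    | .inl x, .inl y => G.Adj x y
    | .inr x, .inr y => H.Adj x y
    | .inl _, .inr _ => True
    | .inr _, .inl _ => True
  symm := by
    refine ⟨?_⟩
    rintro (x | x) (y | y) h
    · exact G.adj_symm h
    · trivial
    · trivial
    · exact H.adj_symm h
  loopless := by
    refine ⟨?_⟩
    rintro (x | x) h
    · exact G.irrefl h
    · exact H.irrefl h

open Classical in
/-- Indicator that a graph has an isolated vertex. -/
noncomputable def isoInd (G : SimpleGraph V) : ℕ :=
  if ∃ x, ∀ y, ¬ G.Adj x y then 1 else 0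

-- basic
lemma mem_cnbr {G : SimpleGraph V} {u v : V} : u ∈ cnbr G v ↔ u = v ∨ G.Adj v u := by
  simp [cnbr, mem_neighborSet]

lemma self_mem_cnbr (G : SimpleGraph V) (v : V) : v ∈ cnbr G v := by
  simp [cnbr]

open Classical in
lemma domCount_eq_countP (G : SimpleGraph V) (u : V) {l : List V} (h : l.Nodup) :
    domCount G u l = l.countP (fun w => decide (u ∈ cnbr G w)) := by
  classical
  have hset : {w | w ∈ l ∧ u ∈ cnbr G w} =
      ((l.filter (fun w => decide (u ∈ cnbr G w))).toFinset : Set V) := by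
    ext w
    simp [List.mem_filter]
  rw [domCount, hset, Set.ncard_coe_finset]
  rw [List.toFinset_card_of_nodup (h.filter _)]
  exact (List.countP_eq_length_filter).symm

open Classical in
lemma domCount_snoc (G : SimpleGraph V) (u x : V) {l : List V} (h : (l ++ [x]).Nodup) :
    domCount G u (l ++ [x]) = domCount G u l + (if u ∈ cnbr G x then 1 else 0) := by
  classical
  rw [domCount_eq_countP G u h, domCount_eq_countP G u (List.Nodup.of_append_left h),
    List.countP_append]
  simp [List.countP_cons]

open Classical in
lemma domCount_le_length (G : SimpleGraph V) (u : V) {l : List V} (h : l.Nodup) :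
    domCount G u l ≤ l.length := by
  rw [domCount_eq_countP G u h]; exact List.countP_le_length

lemma isDNS_nil (G : SimpleGraph V) : IsDNS G [] :=
  ⟨List.nodup_nil, fun i => absurd i.2 (by simp)⟩

lemma isDNS_snoc (G : SimpleGraph V) (l : List V) (x : V) :
    IsDNS G (l ++ [x]) ↔ IsDNS G l ∧ x ∉ l ∧ ∃ u ∈ cnbr G x, domCount G u l ≤ 1 := by
  constructor
  · rintro ⟨hnd, hw⟩
    have hxl : x ∉ l := by
      have := List.disjoint_of_nodup_append hnd
      intro hx; exact this hx (by simp)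
    refine ⟨⟨List.Nodup.of_append_left hnd, ?_⟩, hxl, ?_⟩
    · intro i
      have hi : (i : ℕ) < (l ++ [x]).length := by
        simp
      obtain ⟨u, hu1, hu2⟩ := hw ⟨i, hi⟩
      refine ⟨u, ?_, ?_⟩
      · convert hu1 using 2
        simp [List.getElem_append, i.2]
      · convert hu2 using 2
        rw [List.take_append_of_le_length (le_of_lt i.2)]
    · have hlen : l.length < (l ++ [x]).length := by simp
      obtain ⟨u, hu1, hu2⟩ := hw ⟨l.length, hlen⟩
      refine ⟨u, ?_, ?_⟩
      · convert hu1 using 2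
        simp
      · convert hu2 using 2
        simp [List.take_append_of_le_length]
  · rintro ⟨⟨hnd, hw⟩, hxl, u, hu1, hu2⟩
    have hnd' : (l ++ [x]).Nodup := by
      rw [List.nodup_append]
      refine ⟨hnd, List.nodup_singleton x, ?_⟩
      intro a ha b hb hab
      simp at hb
      subst hb; subst hab; exact hxl ha
    refine ⟨hnd', fun i => ?_⟩
    rcases lt_or_ge (i : ℕ) l.length with hi | hi
    · obtain ⟨v, hv1, hv2⟩ := hw ⟨i, hi⟩
      refine ⟨v, ?_, ?_⟩
      · convert hv1 using 2
        simp [List.getElem_append, hi]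
      · convert hv2 using 2
        rw [List.take_append_of_le_length (le_of_lt hi)]
    · have hieq : (i : ℕ) = l.length := by
        have := i.2; simp at this; omega
      refine ⟨u, ?_, ?_⟩
      · convert hu1 using 2
        have : (l ++ [x]).get i = (l ++ [x]).get ⟨l.length, by simp⟩ := by
          congr 1; exact Fin.ext hieq
        rw [this]; simp
      · convert hu2 using 2
        rw [hieq, List.take_append_of_le_length le_rfl]
        simp


section JoinLemmas

variable {α β : Type*} {G : SimpleGraph α} {H : SimpleGraph β}

lemma adj_joinG_iff_ll {x y : α} : (joinG G H).Adj (.inl x) (.inl y) ↔ G.Adj x y := Iff.rfl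
lemma adj_joinG_iff_rr {x y : β} : (joinG G H).Adj (.inr x) (.inr y) ↔ H.Adj x y := Iff.rfl

lemma cnbr_join_ll {u v : α} : (Sum.inl u : α ⊕ β) ∈ cnbr (joinG G H) (.inl v) ↔ u ∈ cnbr G v := by
  rw [mem_cnbr, mem_cnbr]
  simp [adj_joinG_iff_ll]

lemma cnbr_join_rr {u v : β} : (Sum.inr u : α ⊕ β) ∈ cnbr (joinG G H) (.inr v) ↔ u ∈ cnbr H v := by
  rw [mem_cnbr, mem_cnbr]
  simp [adj_joinG_iff_rr]

lemma cnbr_join_lr {u : α} {v : β} : (Sum.inl u : α ⊕ β) ∈ cnbr (joinG G H) (.inr v) := by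
  rw [mem_cnbr]
  right; trivial

lemma cnbr_join_rl {u : β} {v : α} : (Sum.inr u : α ⊕ β) ∈ cnbr (joinG G H) (.inl v) := by
  rw [mem_cnbr]
  right; trivial

open Classical in
lemma countP_join_inl (u : α) (l : List (α ⊕ β)) :
    l.countP (fun w => decide ((Sum.inl u : α ⊕ β) ∈ cnbr (joinG G H) w)) =
    (l.filterMap Sum.getLeft?).countP (fun w => decide (u ∈ cnbr G w)) +
      l.countP Sum.isRight := by
  induction l with
  | nil => simp
  | cons a t ih =>
    cases a with
    | inl x =>
      simp only [List.countP_cons, List.filterMap_cons, Sum.getLeft?]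
      have : decide ((Sum.inl u : α ⊕ β) ∈ cnbr (joinG G H) (.inl x)) = decide (u ∈ cnbr G x) :=
        decide_eq_decide.mpr cnbr_join_ll
      simp [this, ih]
      omega
    | inr y =>
      simp only [List.countP_cons, List.filterMap_cons, Sum.getLeft?]
      have : ((Sum.inl u : α ⊕ β) ∈ cnbr (joinG G H) (.inr y)) := cnbr_join_lr
      simp [this, ih]
      omega

open Classical in
lemma countP_join_inr (u : β) (l : List (α ⊕ β)) :
    l.countP (fun w => decide ((Sum.inr u : α ⊕ β) ∈ cnbr (joinG G H) w)) =
    (l.filterMap Sum.getRight?).countP (fun w => decide (u ∈ cnbr H w)) +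
      l.countP Sum.isLeft := by
  induction l with
  | nil => simp
  | cons a t ih =>
    cases a with
    | inr y =>
      simp only [List.countP_cons, List.filterMap_cons, Sum.getRight?]
      have : decide ((Sum.inr u : α ⊕ β) ∈ cnbr (joinG G H) (.inr y)) = decide (u ∈ cnbr H y) :=
        decide_eq_decide.mpr cnbr_join_rr
      simp [this, ih]
      omega
    | inl x =>
      simp only [List.countP_cons, List.filterMap_cons, Sum.getRight?]
      have : ((Sum.inr u : α ⊕ β) ∈ cnbr (joinG G H) (.inl x)) := cnbr_join_rl
      simp [this, ih]
      omega

lemma nodup_filterMap_getLeft {l : List (α ⊕ β)} (h : l.Nodup) :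
    (l.filterMap Sum.getLeft?).Nodup :=
  List.Nodup.filterMap (fun a a' b hb hb' => by
    cases a <;> cases a' <;> simp_all [Sum.getLeft?]) h

lemma nodup_filterMap_getRight {l : List (α ⊕ β)} (h : l.Nodup) :
    (l.filterMap Sum.getRight?).Nodup :=
  List.Nodup.filterMap (fun a a' b hb hb' => by
    cases a <;> cases a' <;> simp_all [Sum.getRight?]) h

/-- dominator count of a left vertex in the join. -/
lemma domCount_join_inl (u : α) {l : List (α ⊕ β)} (h : l.Nodup) :
    domCount (joinG G H) (.inl u) l =
      domCount G u (l.filterMap Sum.getLeft?) + l.countP Sum.isRight := by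
  classical
  rw [domCount_eq_countP _ _ h, domCount_eq_countP _ _ (nodup_filterMap_getLeft h),
    countP_join_inl]

lemma domCount_join_inr (u : β) {l : List (α ⊕ β)} (h : l.Nodup) :
    domCount (joinG G H) (.inr u) l =
      domCount H u (l.filterMap Sum.getRight?) + l.countP Sum.isLeft := by
  classical
  rw [domCount_eq_countP _ _ h, domCount_eq_countP _ _ (nodup_filterMap_getRight h),
    countP_join_inr]

lemma length_filterMap_getLeft (l : List (α ⊕ β)) :
    (l.filterMap Sum.getLeft?).length = l.countP Sum.isLeft := by
  induction l with
  | nil => simp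
  | cons a t ih => cases a <;> simp [List.countP_cons, List.filterMap_cons, Sum.getLeft?, ih]

lemma length_filterMap_getRight (l : List (α ⊕ β)) :
    (l.filterMap Sum.getRight?).length = l.countP Sum.isRight := by
  induction l with
  | nil => simp
  | cons a t ih => cases a <;> simp [List.countP_cons, List.filterMap_cons, Sum.getRight?, ih]

lemma countP_left_add_right (l : List (α ⊕ β)) :
    l.countP Sum.isLeft + l.countP Sum.isRight = l.length := by
  induction l with
  | nil => simp
  | cons a t ih => cases a <;> simp [List.countP_cons] <;> omega

end JoinLemmas


section MdnnFacts

variable {W : Type*}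

lemma length_le_mdnn [Fintype V] {G : SimpleGraph V} {l : List V} (h : IsDNS G l) :
    l.length ≤ mdnn G := by
  apply le_csSup
  · refine ⟨Fintype.card V, ?_⟩
    rintro n ⟨m, hm, rfl⟩
    exact hm.1.length_le_card
  · exact ⟨l, h, rfl⟩

lemma exists_mdnn [Fintype V] (G : SimpleGraph V) :
    ∃ l : List V, IsDNS G l ∧ l.length = mdnn G := by
  have h1 : {n | ∃ l : List V, IsDNS G l ∧ l.length = n}.Nonempty :=
    ⟨0, [], isDNS_nil G, rfl⟩
  have h2 : BddAbove {n | ∃ l : List V, IsDNS G l ∧ l.length = n} := by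
    refine ⟨Fintype.card V, ?_⟩
    rintro n ⟨m, hm, rfl⟩
    exact hm.1.length_le_card
  exact Nat.sSup_mem h1 h2

open Classical in
lemma domCount_map {G : SimpleGraph V} {G' : SimpleGraph W} {f : V → W}
    (hinj : Function.Injective f)
    (hc : ∀ u v : V, u ∈ cnbr G v ↔ f u ∈ cnbr G' (f v))
    (u : V) {l : List V} (h : l.Nodup) :
    domCount G' (f u) (l.map f) = domCount G u l := by
  classical
  rw [domCount_eq_countP _ _ (h.map hinj), domCount_eq_countP _ _ h, List.countP_map]
  apply List.countP_congr
  intro w _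
  simp only [Function.comp_apply]
  simp only [decide_eq_true_eq]
  exact (hc u w).symm

lemma isDNS_map {G : SimpleGraph V} {G' : SimpleGraph W} {f : V → W}
    (hinj : Function.Injective f)
    (hc : ∀ u v : V, u ∈ cnbr G v ↔ f u ∈ cnbr G' (f v))
    {l : List V} (h : IsDNS G l) : IsDNS G' (l.map f) := by
  induction l using List.reverseRecOn with
  | nil => exact isDNS_nil G'
  | append_singleton l x ih =>
    rw [isDNS_snoc] at h
    obtain ⟨h1, h2, u, hu1, hu2⟩ := h
    rw [List.map_append, List.map_singleton, isDNS_snoc]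
    refine ⟨ih h1, ?_, f u, (hc u x).mp hu1, ?_⟩
    · intro hmem
      obtain ⟨a, ha, hfa⟩ := List.mem_map.mp hmem
      exact h2 (hinj hfa ▸ ha)
    · rw [domCount_map hinj hc u h1.1]
      exact hu2

lemma finite_domSet (G : SimpleGraph V) (u : V) (l : List V) :
    {w | w ∈ l ∧ u ∈ cnbr G w}.Finite :=
  l.finite_toSet.subset (fun _ hw => hw.1)

lemma domCount_eq_zero_notmem {G : SimpleGraph V} {u : V} {l : List V}
    (hc : domCount G u l = 0) : u ∉ l := by
  intro hu
  have hpos : 0 < domCount G u l :=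
    (Set.ncard_pos (finite_domSet G u l)).mpr ⟨u, hu, self_mem_cnbr G u⟩
  omega

lemma domCount_only_self {G : SimpleGraph V} {u : V} {l : List V}
    (hc : domCount G u l ≤ 1) (hu : u ∈ l) {w : V} (hw : w ∈ l) (hww : u ∈ cnbr G w) :
    w = u := by
  exact (Set.ncard_le_one_iff (finite_domSet G u l)).mp hc ⟨hw, hww⟩ ⟨hu, self_mem_cnbr G u⟩

/-- Extension by one: if some vertex is dominated at most once by a DNS,
the DNS can be extended (possibly using the isolated-vertex budget). -/
lemma extend_one [Fintype V] {G : SimpleGraph V} {L : List V} (h : IsDNS G L) (u : V)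
    (hc : domCount G u L ≤ 1) : L.length + 1 ≤ mdnn G + isoInd G := by
  classical
  by_cases hu : u ∈ L
  · by_cases hnb : ∃ w, G.Adj u w
    · obtain ⟨w, hw⟩ := hnb
      have hwL : w ∉ L := by
        intro hwL
        have : w = u := domCount_only_self hc hu hwL (mem_cnbr.mpr (Or.inr hw.symm))
        exact G.loopless.irrefl u (this ▸ hw)
      have : IsDNS G (L ++ [w]) := by
        rw [isDNS_snoc]
        exact ⟨h, hwL, u, mem_cnbr.mpr (Or.inr hw.symm), hc⟩
      have := length_le_mdnn this
      simp at this
      omega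
    · have hiso : isoInd G = 1 := by
        rw [isoInd, if_pos ⟨u, fun y hy => hnb ⟨y, hy⟩⟩]
      have := length_le_mdnn h
      omega
  · have : IsDNS G (L ++ [u]) := by
      rw [isDNS_snoc]
      exact ⟨h, hu, u, self_mem_cnbr G u, hc⟩
    have := length_le_mdnn this
    simp at this
    omega

/-- Extension by two: if some vertex is not dominated at all by a DNS,
the DNS can be extended by two (possibly using the isolated-vertex budget). -/
lemma extend_two [Fintype V] {G : SimpleGraph V} {L : List V} (h : IsDNS G L) (u : V)
    (hc : domCount G u L = 0) : L.length + 2 ≤ mdnn G + isoInd G := by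
  classical
  have huL : u ∉ L := domCount_eq_zero_notmem hc
  have hLu : IsDNS G (L ++ [u]) := by
    rw [isDNS_snoc]
    exact ⟨h, huL, u, self_mem_cnbr G u, by omega⟩
  by_cases hnb : ∃ w, G.Adj u w
  · obtain ⟨w, hw⟩ := hnb
    have hwL : w ∉ L := by
      intro hwL
      have : 0 < domCount G u L :=
        (Set.ncard_pos (finite_domSet G u L)).mpr ⟨w, hwL, mem_cnbr.mpr (Or.inr hw.symm)⟩
      omega
    have hwu : w ≠ u := fun hwu => G.loopless.irrefl u (hwu ▸ hw)
    have : IsDNS G ((L ++ [u]) ++ [w]) := by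
      rw [isDNS_snoc]
      refine ⟨hLu, ?_, u, mem_cnbr.mpr (Or.inr hw.symm), ?_⟩
      · simp [hwL, hwu]
      · rw [domCount_snoc G u u hLu.1, hc]
        simp [self_mem_cnbr]
    have := length_le_mdnn this
    simp at this
    omega
  · have hiso : isoInd G = 1 := by
      rw [isoInd, if_pos ⟨u, fun y hy => hnb ⟨y, hy⟩⟩]
    have := length_le_mdnn hLu
    simp at this
    omega

lemma two_le_mdnn_add [Fintype V] [Nonempty V] (G : SimpleGraph V) :
    2 ≤ mdnn G + isoInd G := by
  classical
  by_cases h : ∃ a b : V, a ≠ b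
  · obtain ⟨a, b, hab⟩ := h
    have h1 : IsDNS G [a] := by
      have := isDNS_snoc G [] a
      simp only [List.nil_append] at this
      rw [this]
      exact ⟨isDNS_nil G, by simp, a, self_mem_cnbr G a, by rw [domCount]; simp⟩
    have h2 : IsDNS G ([a] ++ [b]) := by
      rw [isDNS_snoc]
      refine ⟨h1, by simp [Ne.symm hab], b, self_mem_cnbr G b, ?_⟩
      calc domCount G b [a] ≤ [a].length := domCount_le_length G b (List.nodup_singleton a)
      _ = 1 := rfl
    have := length_le_mdnn h2
    simp at this
    omega
  · push_neg at h
    obtain ⟨x⟩ := ‹Nonempty V›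
    have hiso : isoInd G = 1 := by
      rw [isoInd, if_pos ⟨x, fun y hy => G.loopless.irrefl x ((h x y) ▸ hy)⟩]
    have h1 : IsDNS G ([] ++ [x]) := by
      rw [isDNS_snoc]
      exact ⟨isDNS_nil G, by simp, x, self_mem_cnbr G x, by rw [domCount]; simp⟩
    have := length_le_mdnn h1
    simp at this
    omega

end MdnnFacts


section Projection

variable {α β : Type*} {G : SimpleGraph α} {H : SimpleGraph β}

lemma isDNS_proj_left {l : List (α ⊕ β)} (h : IsDNS (joinG G H) l) :
    IsDNS G (l.filterMap Sum.getLeft?) := by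
  induction l using List.reverseRecOn with
  | nil => exact isDNS_nil G
  | append_singleton l' e ih =>
    rw [isDNS_snoc] at h
    obtain ⟨h1, h2, u, hu1, hu2⟩ := h
    have hnd' : l'.Nodup := h1.1
    cases e with
    | inl x =>
      rw [List.filterMap_append]
      simp only [List.filterMap_cons, Sum.getLeft?, List.filterMap_nil]
      rw [isDNS_snoc]
      refine ⟨ih h1, ?_, ?_⟩
      · intro hmem
        obtain ⟨a, ha, hga⟩ := List.mem_filterMap.mp hmem
        cases a <;> simp [Sum.getLeft?] at hga
        exact h2 (hga ▸ ha)
      · cases u with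
        | inl u' =>
          refine ⟨u', cnbr_join_ll.mp hu1, ?_⟩
          rw [domCount_join_inl u' hnd'] at hu2
          omega
        | inr u' =>
          refine ⟨x, self_mem_cnbr G x, ?_⟩
          rw [domCount_join_inr u' hnd'] at hu2
          calc domCount G x (l'.filterMap Sum.getLeft?)
              ≤ (l'.filterMap Sum.getLeft?).length :=
                domCount_le_length G x (nodup_filterMap_getLeft hnd')
            _ = l'.countP Sum.isLeft := length_filterMap_getLeft l'
            _ ≤ 1 := by omega
    | inr y =>
      rw [List.filterMap_append]
      simp only [List.filterMap_cons, Sum.getRight?, List.filterMap_nil]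
      simpa using ih h1

lemma isDNS_proj_right {l : List (α ⊕ β)} (h : IsDNS (joinG G H) l) :
    IsDNS H (l.filterMap Sum.getRight?) := by
  induction l using List.reverseRecOn with
  | nil => exact isDNS_nil H
  | append_singleton l' e ih =>
    rw [isDNS_snoc] at h
    obtain ⟨h1, h2, u, hu1, hu2⟩ := h
    have hnd' : l'.Nodup := h1.1
    cases e with
    | inr y =>
      rw [List.filterMap_append]
      simp only [List.filterMap_cons, Sum.getRight?, List.filterMap_nil]
      rw [isDNS_snoc]
      refine ⟨ih h1, ?_, ?_⟩
      · intro hmem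
        obtain ⟨a, ha, hga⟩ := List.mem_filterMap.mp hmem
        cases a <;> simp [Sum.getRight?] at hga
        exact h2 (hga ▸ ha)
      · cases u with
        | inr u' =>
          refine ⟨u', cnbr_join_rr.mp hu1, ?_⟩
          rw [domCount_join_inr u' hnd'] at hu2
          omega
        | inl u' =>
          refine ⟨y, self_mem_cnbr H y, ?_⟩
          rw [domCount_join_inl u' hnd'] at hu2
          calc domCount H y (l'.filterMap Sum.getRight?)
              ≤ (l'.filterMap Sum.getRight?).length :=
                domCount_le_length H y (nodup_filterMap_getRight hnd')
            _ = l'.countP Sum.isRight := length_filterMap_getRight l'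
            _ ≤ 1 := by omega
    | inl x =>
      rw [List.filterMap_append]
      simp only [List.filterMap_cons, Sum.getLeft?, List.filterMap_nil]
      simpa using ih h1

/-- Dichotomy: any DNS of a join has at most two vertices on one of the sides. -/
lemma counts_small {l : List (α ⊕ β)} (h : IsDNS (joinG G H) l) :
    l.countP Sum.isLeft ≤ 2 ∨ l.countP Sum.isRight ≤ 2 := by
  by_contra hcon
  push_neg at hcon
  obtain ⟨hL, hR⟩ := hcon
  rcases List.eq_nil_or_concat l with rfl | ⟨l', e, rfl⟩
  · simp at hL
  · rw [List.concat_eq_append] at h hL hR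
    rw [isDNS_snoc] at h
    obtain ⟨h1, _, u, _, hu2⟩ := h
    have hL' : 2 ≤ l'.countP Sum.isLeft := by
      rw [List.countP_append] at hL
      have : (List.countP Sum.isLeft [e]) ≤ 1 := List.countP_le_length
      omega
    have hR' : 2 ≤ l'.countP Sum.isRight := by
      rw [List.countP_append] at hR
      have : (List.countP Sum.isRight [e]) ≤ 1 := List.countP_le_length
      omega
    cases u with
    | inl u' =>
      rw [domCount_join_inl u' h1.1] at hu2
      omega
    | inr u' =>
      rw [domCount_join_inr u' h1.1] at hu2
      omega

end Projection


section MainLemmas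

variable {α β : Type*}

lemma cnbr_swap {G : SimpleGraph α} {H : SimpleGraph β} (u v : α ⊕ β) :
    u ∈ cnbr (joinG G H) v ↔ u.swap ∈ cnbr (joinG H G) v.swap := by
  cases u <;> cases v <;>
    simp only [Sum.swap_inl, Sum.swap_inr, mem_cnbr, adj_joinG_iff_ll, adj_joinG_iff_rr,
      Sum.inl.injEq, Sum.inr.injEq] <;>
    first
      | rfl
      | (constructor <;> rintro (h | h) <;> simp_all [joinG])

lemma mdnn_join_le_comm [Fintype α] [Fintype β] (G : SimpleGraph α) (H : SimpleGraph β) :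
    mdnn (joinG G H) ≤ mdnn (joinG H G) := by
  have hne : {n | ∃ l : List (α ⊕ β), IsDNS (joinG G H) l ∧ l.length = n}.Nonempty :=
    ⟨0, [], isDNS_nil _, rfl⟩
  apply csSup_le hne
  rintro n ⟨l, hl, rfl⟩
  have hswapinj : Function.Injective (Sum.swap : α ⊕ β → β ⊕ α) := by
    intro a b hab
    simpa using congrArg Sum.swap hab
  have := isDNS_map hswapinj cnbr_swap hl
  have hlen := length_le_mdnn this
  simpa using hlen

lemma mdnn_join_comm [Fintype α] [Fintype β] (G : SimpleGraph α) (H : SimpleGraph β) :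
    mdnn (joinG G H) = mdnn (joinG H G) :=
  le_antisymm (mdnn_join_le_comm G H) (mdnn_join_le_comm H G)

lemma filterMap_getLeft_map_inl (L : List α) :
    ((L.map (Sum.inl : α → α ⊕ β)).filterMap Sum.getLeft?) = L := by
  induction L with
  | nil => rfl
  | cons a t ih => simp [Sum.getLeft?, ih]

lemma countP_isRight_map_inl (L : List α) :
    (L.map (Sum.inl : α → α ⊕ β)).countP Sum.isRight = 0 := by
  induction L with
  | nil => rfl
  | cons a t ih => simp [List.countP_cons, ih]

/-- Lower bound, G side. -/
lemma mdnn_join_ge_left [Fintype α] [Fintype β] [Nonempty β]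
    (G : SimpleGraph α) (H : SimpleGraph β) :
    mdnn G + isoInd G ≤ mdnn (joinG G H) := by
  classical
  obtain ⟨L, hL, hlen⟩ := exists_mdnn G
  have hmapDNS : IsDNS (joinG G H) (L.map Sum.inl) :=
    isDNS_map Sum.inl_injective (fun u v => cnbr_join_ll.symm) hL
  by_cases hiso : ∃ x, ∀ y, ¬ G.Adj x y
  · obtain ⟨x0, hx0⟩ := hiso
    obtain ⟨y⟩ := ‹Nonempty β›
    have hdns : IsDNS (joinG G H) (L.map Sum.inl ++ [Sum.inr y]) := by
      rw [isDNS_snoc]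
      refine ⟨hmapDNS, ?_, Sum.inl x0, cnbr_join_lr, ?_⟩
      · intro hmem
        obtain ⟨a, _, hfa⟩ := List.mem_map.mp hmem
        exact Sum.inl_ne_inr hfa
      · rw [domCount_join_inl x0 hmapDNS.1, filterMap_getLeft_map_inl, countP_isRight_map_inl]
        have hsub : {w | w ∈ L ∧ x0 ∈ cnbr G w} ⊆ {x0} := by
          intro w ⟨_, hw2⟩
          rcases mem_cnbr.mp hw2 with h | h
          · exact h ▸ rfl
          · exact absurd h.symm (hx0 w)
        calc domCount G x0 L ≤ ({x0} : Set α).ncard :=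
              Set.ncard_le_ncard hsub (Set.finite_singleton x0)
          _ = 1 := Set.ncard_singleton x0
    have := length_le_mdnn hdns
    simp at this
    have hind : isoInd G = 1 := by rw [isoInd, if_pos ⟨x0, hx0⟩]
    omega
  · have hind : isoInd G = 0 := by rw [isoInd, if_neg hiso]
    have := length_le_mdnn hmapDNS
    simp at this
    omega

end MainLemmas


section UpperBound

variable {α β : Type*}

/-- Upper bound when the DNS of the join has at most 2 right-side vertices. -/
lemma ub_left [Fintype α] [Fintype β] [Nonempty α] [Nonempty β]
    (G : SimpleGraph α) (H : SimpleGraph β) {l : List (α ⊕ β)}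
    (h : IsDNS (joinG G H) l) (hk : l.countP Sum.isRight ≤ 2) :
    l.length ≤ max (mdnn G + isoInd G) (mdnn H + isoInd H) := by
  classical
  have hsum : l.countP Sum.isLeft + l.countP Sum.isRight = l.length := countP_left_add_right l
  by_cases hk0 : l.countP Sum.isRight = 0
  · have hn : (l.filterMap Sum.getLeft?).length = l.countP Sum.isLeft :=
      length_filterMap_getLeft l
    have := length_le_mdnn (isDNS_proj_left h)
    refine le_trans ?_ (le_max_left _ _)
    omega
  rcases List.eq_nil_or_concat l with rfl | ⟨l', e, rfl⟩
  · simp at hk0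
  rw [List.concat_eq_append] at h hk hk0 hsum ⊢
  have hfull := h
  rw [isDNS_snoc] at h
  obtain ⟨h1, h2, u, hu1, hu2⟩ := h
  have hnd' : l'.Nodup := h1.1
  have hGl' := isDNS_proj_left h1
  have hHl' := isDNS_proj_right h1
  have hlenG' : (l'.filterMap Sum.getLeft?).length = l'.countP Sum.isLeft :=
    length_filterMap_getLeft l'
  have hlenH' : (l'.filterMap Sum.getRight?).length = l'.countP Sum.isRight :=
    length_filterMap_getRight l'
  have hsum' : l'.countP Sum.isLeft + l'.countP Sum.isRight = l'.length :=
    countP_left_add_right l'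
  cases e with
  | inl x =>
    have hcR : (l' ++ [Sum.inl x]).countP Sum.isRight = l'.countP Sum.isRight := by
      rw [List.countP_append]; simp
    have hcL : (l' ++ [Sum.inl x]).countP Sum.isLeft = l'.countP Sum.isLeft + 1 := by
      rw [List.countP_append]; simp
    have hlG : (l' ++ [Sum.inl x]).filterMap Sum.getLeft?
        = l'.filterMap Sum.getLeft? ++ [x] := by
      rw [List.filterMap_append]; simp [Sum.getLeft?]
    have hGfull : IsDNS G (l'.filterMap Sum.getLeft? ++ [x]) := by
      rw [← hlG]; exact isDNS_proj_left hfull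
    cases u with
    | inl u' =>
      rw [domCount_join_inl u' hnd'] at hu2
      have hd0 : domCount G u' (l'.filterMap Sum.getLeft?) = 0 := by omega
      have hd1 : domCount G u' (l'.filterMap Sum.getLeft? ++ [x]) ≤ 1 := by
        rw [domCount_snoc G u' x hGfull.1, hd0]
        split <;> omega
      have hext := extend_one hGfull u' hd1
      refine le_trans ?_ (le_max_left _ _)
      simp only [List.length_append, List.length_singleton] at hext ⊢
      omega
    | inr u' =>
      rw [domCount_join_inr u' hnd'] at hu2
      by_cases ha : l'.countP Sum.isLeft = 1
      · have hd0 : domCount H u' (l'.filterMap Sum.getRight?) = 0 := by omega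
        have hext := extend_two hHl' u' hd0
        refine le_trans ?_ (le_max_right _ _)
        simp only [List.length_append, List.length_singleton]
        omega
      · have ha0 : l'.countP Sum.isLeft = 0 := by omega
        by_cases hb2 : l'.countP Sum.isRight = 2
        · have hext := extend_one hHl' u' (by omega)
          refine le_trans ?_ (le_max_right _ _)
          simp only [List.length_append, List.length_singleton]
          omega
        · have := two_le_mdnn_add G
          refine le_trans ?_ (le_max_left _ _)
          simp only [List.length_append, List.length_singleton]
          omega
  | inr y =>
    have hcR : (l' ++ [Sum.inr y]).countP Sum.isRight = l'.countP Sum.isRight + 1 := by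
      rw [List.countP_append]; simp
    have hcL : (l' ++ [Sum.inr y]).countP Sum.isLeft = l'.countP Sum.isLeft := by
      rw [List.countP_append]; simp
    have hlH : (l' ++ [Sum.inr y]).filterMap Sum.getRight?
        = l'.filterMap Sum.getRight? ++ [y] := by
      rw [List.filterMap_append]; simp [Sum.getRight?]
    have hHfull : IsDNS H (l'.filterMap Sum.getRight? ++ [y]) := by
      rw [← hlH]; exact isDNS_proj_right hfull
    cases u with
    | inl u' =>
      rw [domCount_join_inl u' hnd'] at hu2
      by_cases hb0 : l'.countP Sum.isRight = 0
      · have hext := extend_one hGl' u' (by omega)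
        refine le_trans ?_ (le_max_left _ _)
        simp only [List.length_append, List.length_singleton]
        omega
      · have hb1 : l'.countP Sum.isRight = 1 := by omega
        have hd0 : domCount G u' (l'.filterMap Sum.getLeft?) = 0 := by omega
        have hext := extend_two hGl' u' hd0
        refine le_trans ?_ (le_max_left _ _)
        simp only [List.length_append, List.length_singleton]
        omega
    | inr u' =>
      rw [domCount_join_inr u' hnd'] at hu2
      by_cases ha : l'.countP Sum.isLeft = 1
      · have hd1 : domCount H u' (l'.filterMap Sum.getRight? ++ [y]) ≤ 1 := by
          rw [domCount_snoc H u' y hHfull.1]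
          split <;> omega
        have hext := extend_one hHfull u' hd1
        refine le_trans ?_ (le_max_right _ _)
        simp only [List.length_append, List.length_singleton] at hext ⊢
        omega
      · have ha0 : l'.countP Sum.isLeft = 0 := by omega
        have := two_le_mdnn_add G
        refine le_trans ?_ (le_max_left _ _)
        simp only [List.length_append, List.length_singleton]
        omega

end UpperBound


/-- ρ(G ∨ H) = max{ρ(G) + a(G), ρ(H) + a(H)}. -/
theorem stmt18 {α β : Type*} [Fintype α] [Fintype β] [Nonempty α] [Nonempty β]
    (G : SimpleGraph α) (H : SimpleGraph β) :
    mdnn (joinG G H) = max (mdnn G + isoInd G) (mdnn H + isoInd H) := by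
  classical
  apply le_antisymm
  · have hne : {n | ∃ l : List (α ⊕ β), IsDNS (joinG G H) l ∧ l.length = n}.Nonempty :=
      ⟨0, [], isDNS_nil _, rfl⟩
    apply csSup_le hne
    rintro n ⟨l, hl, rfl⟩
    rcases counts_small hl with hL | hR
    · have hswapinj : Function.Injective (Sum.swap : α ⊕ β → β ⊕ α) := by
        intro a b hab
        simpa using congrArg Sum.swap hab
      have hl' := isDNS_map hswapinj cnbr_swap hl
      have hcnt : (l.map Sum.swap).countP Sum.isRight = l.countP Sum.isLeft := by
        rw [List.countP_map]
        apply List.countP_congr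
        intro a _
        cases a <;> rfl
      have hub := ub_left H G hl' (by rw [hcnt]; exact hL)
      rw [List.length_map] at hub
      exact hub.trans (le_of_eq (max_comm _ _))
    · exact ub_left G H hl hR
  · apply max_le
    · exact mdnn_join_ge_left G H
    · calc mdnn H + isoInd H ≤ mdnn (joinG H G) := mdnn_join_ge_left H G
        _ = mdnn (joinG G H) := (mdnn_join_comm G H).symm
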